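/- For μ = 1 (all n+1 filaments of equal circulation, ω = s_1 + 1), the 3×3 Hermitian matrix m_1(ν) = ν²·diag(1,1,1) − 2γν·diag(1, iJ) + B_1, where B_1 = [[ω, −√(n/2), −√(n/2)·i],[−√(n/2), s_1+2, 0],[√(n/2)·i, 0, s_1]], has eigenvalues λ_0 = ν² − 2γν + ω and λ_± = ν² + ω ± √(4γ²ν² + 2ω). -/
import Mathlib


open Matrix Complex Polynomial

/-- The 3×3 Fourier block `m₁(ν) = ν² I − 2γν diag(1, iJ) + B₁` of the filament
problem with `μ = 1`, where `ω = s₁ + 1`, `n = 2s₁ + 1` and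
`B₁ = !![ω, −√(n/2), −√(n/2) i; −√(n/2), s₁+2, 0; √(n/2) i, 0, s₁]`. -/
noncomputable def m₁F (n s₁ γ ν : ℝ) : Matrix (Fin 3) (Fin 3) ℂ :=
  !![(ν ^ 2 - 2 * γ * ν + (s₁ + 1) : ℝ), (-Real.sqrt (n / 2) : ℝ), -(Real.sqrt (n / 2) : ℂ) * Complex.I;
     (-Real.sqrt (n / 2) : ℝ), (ν ^ 2 + s₁ + 2 : ℝ), 2 * γ * ν * Complex.I;
     (Real.sqrt (n / 2) : ℂ) * Complex.I, -(2 * γ * ν * Complex.I), (ν ^ 2 + s₁ : ℝ)]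

set_option maxRecDepth 4000 in
theorem eigenvalues_m1_filament_mu_one (n : ℕ) (hn : 3 ≤ n) (s₁ γ ν : ℝ)
    (hs : (n : ℝ) = 2 * s₁ + 1) :
    (m₁F n s₁ γ ν).charpoly =
      (X - C ((ν ^ 2 - 2 * γ * ν + (s₁ + 1) : ℝ) : ℂ)) *
      (X - C ((ν ^ 2 + (s₁ + 1) + Real.sqrt (4 * γ ^ 2 * ν ^ 2 + 2 * (s₁ + 1)) : ℝ) : ℂ)) *
      (X - C ((ν ^ 2 + (s₁ + 1) - Real.sqrt (4 * γ ^ 2 * ν ^ 2 + 2 * (s₁ + 1)) : ℝ) : ℂ)) := by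
  have hs1 : (1 : ℝ) ≤ s₁ := by
    have : (3 : ℝ) ≤ (n : ℝ) := by exact_mod_cast hn
    linarith
  have hSr : (Real.sqrt (n / 2)) ^ 2 = (n : ℝ) / 2 :=
    Real.sq_sqrt (by positivity)
  have hTr : (Real.sqrt (4 * γ ^ 2 * ν ^ 2 + 2 * (s₁ + 1))) ^ 2
      = 4 * γ ^ 2 * ν ^ 2 + 2 * (s₁ + 1) :=
    Real.sq_sqrt (by nlinarith [sq_nonneg (γ * ν)])
  have hS : ((Real.sqrt (n / 2) : ℝ) : ℂ) ^ 2 = (n : ℂ) / 2 := by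
    rw [← Complex.ofReal_pow, hSr]; push_cast; ring
  have hT : ((Real.sqrt (4 * γ ^ 2 * ν ^ 2 + 2 * (s₁ + 1)) : ℝ) : ℂ) ^ 2
      = 4 * (γ : ℂ) ^ 2 * (ν : ℂ) ^ 2 + 2 * ((s₁ : ℂ) + 1) := by
    rw [← Complex.ofReal_pow, hTr]; push_cast; ring
  have hnC : (n : ℂ) = 2 * (s₁ : ℂ) + 1 := by exact_mod_cast hs
  apply Polynomial.funext
  intro x
  rw [Matrix.charpoly, ← Polynomial.coe_evalRingHom, RingHom.map_det]
  rw [Matrix.det_fin_three]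
  simp only [RingHom.mapMatrix_apply, Matrix.map_apply,
    charmatrix_apply_eq, charmatrix_apply_ne _ _ _ (by decide : (0:Fin 3) ≠ 1),
    charmatrix_apply_ne _ _ _ (by decide : (0:Fin 3) ≠ 2),
    charmatrix_apply_ne _ _ _ (by decide : (1:Fin 3) ≠ 0),
    charmatrix_apply_ne _ _ _ (by decide : (1:Fin 3) ≠ 2),
    charmatrix_apply_ne _ _ _ (by decide : (2:Fin 3) ≠ 0),
    charmatrix_apply_ne _ _ _ (by decide : (2:Fin 3) ≠ 1)]
  simp only [m₁F, Matrix.of_apply, Matrix.cons_val', Matrix.cons_val_zero, Matrix.cons_val_one,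
    Matrix.head_cons, Matrix.empty_val', Matrix.cons_val_fin_one, Matrix.cons_val_two,
    Matrix.tail_cons, Matrix.head_fin_const]
  simp only [coe_evalRingHom, Polynomial.eval_sub, Polynomial.eval_neg, Polynomial.eval_X,
    Polynomial.eval_C, Polynomial.eval_mul, Polynomial.eval_add]
  push_cast
  set S := ((Real.sqrt (n / 2) : ℝ) : ℂ)
  set T := ((Real.sqrt (4 * γ ^ 2 * ν ^ 2 + 2 * (s₁ + 1)) : ℝ) : ℂ)
  linear_combination
    (4 * x * (γ:ℂ) ^ 2 * (ν:ℂ) ^ 2 - 4 * (γ:ℂ) ^ 2 * (ν:ℂ) ^ 4 + 8 * (γ:ℂ) ^ 3 * (ν:ℂ) ^ 3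
      - 4 * (s₁:ℂ) * (γ:ℂ) ^ 2 * (ν:ℂ) ^ 2 - 4 * (γ:ℂ) ^ 2 * (ν:ℂ) ^ 2
      + 4 * (γ:ℂ) * (ν:ℂ) * S ^ 2 + x * S ^ 2 - (ν:ℂ) ^ 2 * S ^ 2 - (s₁:ℂ) * S ^ 2
      - 2 * S ^ 2) * Complex.I_sq +
    (-2 * x + 2 * (ν : ℂ) ^ 2 + 2 * (s₁ : ℂ) - 4 * (γ : ℂ) * ν + 2) * hS +
    ((-2 * x + 2 * (ν : ℂ) ^ 2 + 2 * (s₁ : ℂ) - 4 * (γ : ℂ) * ν + 2) / 2) * hnC +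
    (x - (ν : ℂ) ^ 2 + 2 * (γ : ℂ) * ν - (s₁ : ℂ) - 1) * hT
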